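/- Consider the point-to-point function update problem: a source knows X + E where X ∈ F_q^n, E ∈ F_q^n with Hamming weight at most ε; the receiver knows AX for a full-rank m×n matrix A (m ≤ n); the source transmits H(X+E) for an ℓ×n matrix H, and a decoder must output A(X+E) correctly for all such X, E. For any valid scheme (H, D), if Y ∈ F_q^n is 2ε-sparse and AY ≠ 0, then BY ≠ 0, where B is a generator matrix of C = C_H ∩ C_A (the intersection of the row spaces of H and A). -/

import Mathlib

open Matrix

section Defs
variable {F : Type*} [Field F]

/-- Rank of the submatrix of `G` consisting of the columns indexed by `S`. -/
noncomputable def colRank {m α : Type*} [Fintype α] (G : Matrix m α F) (S : Finset α) : ℕ :=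
  (G.submatrix id (fun j : S => (j : α))).rank

/-- The row space of a matrix. -/
def rowSpan {m α : Type*} (G : Matrix m α F) : Submodule F (α → F) :=
  Submodule.span F (Set.range fun i => G i)

/-- Rank of the restriction (puncturing) of a code `C` to the coordinates in `S`. -/
noncomputable def restrRank {α : Type*} (C : Submodule F (α → F)) (S : Finset α) : ℕ :=
  Module.finrank F (C.map (LinearMap.funLeft F F (fun j : S => (j : α))))

/-- Shortening of a code on coordinates `α ⊕ β` to the coordinates `α`. -/
noncomputable def shortenSum {α β : Type*} (D : Submodule F ((α ⊕ β) → F)) :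
    Submodule F (α → F) :=
  Submodule.map (LinearMap.funLeft F F Sum.inl)
    (D ⊓ (⨅ j : β, LinearMap.ker
      (LinearMap.proj (R := F) (Sum.inr j) : ((α ⊕ β) → F) →ₗ[F] F)))

/-- A valid (zero-error, worst case) scheme for the point-to-point function-update problem. -/
def IsValidScheme [DecidableEq F] {n m ℓ : ℕ} (A : Matrix (Fin m) (Fin n) F)
    (H : Matrix (Fin ℓ) (Fin n) F) (ε : ℕ)
    (D : (Fin ℓ → F) → (Fin m → F) → (Fin m → F)) : Prop :=
  ∀ X E : Fin n → F, hammingNorm E ≤ ε →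
    D (H.mulVec (X + E)) (A.mulVec X) = A.mulVec (X + E)

end Defs
section Aux
variable {F : Type*} [Field F] {n : ℕ}

lemma toDual_eq_dot (x y : Fin n → F) :
    (Pi.basisFun F (Fin n)).toDual x y = x ⬝ᵥ y := by
  have hy := (Pi.basisFun F (Fin n)).sum_repr y
  calc (Pi.basisFun F (Fin n)).toDual x y
      = (Pi.basisFun F (Fin n)).toDual x
          (∑ i, ((Pi.basisFun F (Fin n)).repr y i) • (Pi.basisFun F (Fin n)) i) := by rw [hy]
    _ = ∑ i, ((Pi.basisFun F (Fin n)).repr y i) *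
          (Pi.basisFun F (Fin n)).toDual x ((Pi.basisFun F (Fin n)) i) := by
        rw [map_sum]
        exact Finset.sum_congr rfl fun i _ => by
          rw [LinearMap.map_smul, smul_eq_mul]
    _ = ∑ i, y i * x i := by
        refine Finset.sum_congr rfl fun i _ => ?_
        rw [Module.Basis.toDual_apply_left, Pi.basisFun_repr, Pi.basisFun_repr]
    _ = x ⬝ᵥ y := by simp [dotProduct, mul_comm]

/-- Decompose `Y` orthogonal to `rowSpan H ⊓ rowSpan A` as `u + w` with `Hu = 0`, `Aw = 0`. -/
lemma exists_decomp {m ℓ : ℕ} (A : Matrix (Fin m) (Fin n) F) (H : Matrix (Fin ℓ) (Fin n) F)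
    (Y : Fin n → F)
    (hperp : ∀ v ∈ rowSpan H ⊓ rowSpan A, Y ⬝ᵥ v = 0) :
    ∃ u w : Fin n → F, Y = u + w ∧ H.mulVec u = 0 ∧ A.mulVec w = 0 := by
  set b := Pi.basisFun F (Fin n)
  have hmem : b.toDual Y ∈ (rowSpan H ⊓ rowSpan A).dualAnnihilator := by
    rw [Submodule.mem_dualAnnihilator]
    intro v hv
    rw [toDual_eq_dot]
    exact hperp v hv
  rw [Subspace.dualAnnihilator_inf_eq, Submodule.mem_sup] at hmem
  obtain ⟨φ, hφ, ψ, hψ, hsum⟩ := hmem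
  rw [Submodule.mem_dualAnnihilator] at hφ hψ
  refine ⟨b.toDualEquiv.symm φ, b.toDualEquiv.symm ψ, ?_, ?_, ?_⟩
  · apply b.toDualEquiv.injective
    rw [map_add]
    simp only [LinearEquiv.apply_symm_apply]
    rw [Module.Basis.toDualEquiv_apply, ← hsum]
  · funext j
    have : b.toDual (b.toDualEquiv.symm φ) (H j) = 0 := by
      rw [← Module.Basis.toDualEquiv_apply, LinearEquiv.apply_symm_apply]
      exact hφ (H j) (Submodule.subset_span ⟨j, rfl⟩)
    rw [toDual_eq_dot] at this
    simpa [Matrix.mulVec, dotProduct_comm] using this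
  · funext j
    have : b.toDual (b.toDualEquiv.symm ψ) (A j) = 0 := by
      rw [← Module.Basis.toDualEquiv_apply, LinearEquiv.apply_symm_apply]
      exact hψ (A j) (Submodule.subset_span ⟨j, rfl⟩)
    rw [toDual_eq_dot] at this
    simpa [Matrix.mulVec, dotProduct_comm] using this

lemma exists_sparse_split [DecidableEq F] (Y : Fin n → F) (ε : ℕ)
    (hY : hammingNorm Y ≤ 2 * ε) :
    ∃ E₁ E₂ : Fin n → F, Y = E₁ - E₂ ∧ hammingNorm E₁ ≤ ε ∧ hammingNorm E₂ ≤ ε := by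
  classical
  set s : Finset (Fin n) := {i | Y i ≠ 0} with hs
  have hscard : s.card = hammingNorm Y := rfl
  obtain ⟨t, hts, htcard⟩ := Finset.exists_subset_card_eq (min_le_right ε s.card :
    min ε s.card ≤ s.card)
  refine ⟨fun i => if i ∈ t then Y i else 0, fun i => if i ∈ t then 0 else -Y i, ?_, ?_, ?_⟩
  · funext i
    by_cases h : i ∈ t <;> simp [h]
  · calc hammingNorm (fun i => if i ∈ t then Y i else 0)
        ≤ t.card := by
          apply Finset.card_le_card
          intro i hi
          simp only [hammingNorm, Finset.mem_filter, Finset.mem_univ, true_and] at hi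
          by_contra h
          simp [h] at hi
      _ ≤ ε := htcard ▸ min_le_left _ _
  · calc hammingNorm (fun i => if i ∈ t then 0 else -Y i)
        ≤ (s \ t).card := by
          apply Finset.card_le_card
          intro i hi
          simp only [hammingNorm, Finset.mem_filter, Finset.mem_univ, true_and] at hi
          rw [Finset.mem_sdiff]
          by_cases h : i ∈ t
          · simp [h] at hi
          · simp only [h, if_false, neg_ne_zero] at hi
            exact ⟨by simp [hs, hi], h⟩
      _ = s.card - min ε s.card := by rw [Finset.card_sdiff_of_subset hts, htcard]
      _ ≤ ε := by
          rw [hscard]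
          omega

end Aux

/-- for any valid point-to-point scheme, every `2ε`-sparse `Y` with
`AY ≠ 0` also satisfies `BY ≠ 0`, where `B` generates `C_H ∩ C_A`. -/
theorem valid_scheme_sparse_not_in_dual {F : Type*} [Field F] [Fintype F] [DecidableEq F]
    {n m ℓ r ε : ℕ} (hm : m ≤ n)
    (A : Matrix (Fin m) (Fin n) F) (hA : A.rank = m)
    (H : Matrix (Fin ℓ) (Fin n) F)
    (D : (Fin ℓ → F) → (Fin m → F) → (Fin m → F))
    (hvalid : IsValidScheme A H ε D)
    (B : Matrix (Fin r) (Fin n) F)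
    (hB : rowSpan B = rowSpan H ⊓ rowSpan A)
    (Y : Fin n → F) (hY : hammingNorm Y ≤ 2 * ε) (hAY : A.mulVec Y ≠ 0) :
    B.mulVec Y ≠ 0 := by
  intro hBY
  -- `Y` is orthogonal to the row span of `B`, hence to `rowSpan H ⊓ rowSpan A`.
  have hperp : ∀ v ∈ rowSpan H ⊓ rowSpan A, Y ⬝ᵥ v = 0 := by
    intro v hv
    rw [← hB] at hv
    induction hv using Submodule.span_induction with
    | mem v hv =>
        obtain ⟨i, rfl⟩ := hv
        have : B.mulVec Y i = 0 := by rw [hBY]; rfl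
        rw [dotProduct_comm]
        simpa [Matrix.mulVec] using this
    | zero => simp
    | add v w _ _ hv hw => rw [dotProduct_add, hv, hw, add_zero]
    | smul c v _ hv => rw [dotProduct_smul, hv, smul_zero]
  obtain ⟨u, w, hYuw, hHu, hAw⟩ := exists_decomp A H Y hperp
  obtain ⟨E₁, E₂, hYE, hE₁, hE₂⟩ := exists_sparse_split Y ε hY
  have h1 := hvalid 0 E₁ hE₁
  have h2 := hvalid w E₂ hE₂
  rw [zero_add, Matrix.mulVec_zero] at h1
  have hHarg : H.mulVec (w + E₂) = H.mulVec E₁ := by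
    have : H.mulVec Y = H.mulVec w := by
      rw [hYuw, Matrix.mulVec_add, hHu, zero_add]
    rw [Matrix.mulVec_add, ← this, hYE, Matrix.mulVec_sub]
    abel
  rw [hHarg, hAw, h1] at h2
  -- h2 : A.mulVec E₁ = A.mulVec (w + E₂)
  apply hAY
  rw [hYE, Matrix.mulVec_sub, h2, Matrix.mulVec_add, hAw, zero_add]
  abel
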